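/- If a nonnegative supermartingale (ψ_i) with ψ_0 ≤ k₁ satisfies E[ψ_{i+1} | F_i] ≤ ψ_i − k₂ on the event {ψ_i > 0} for constants k₁, k₂ > 0, then E[ψ_i · 1{τ > i}] ≤ k₁ − k₂·E[min(τ, i)] for all i, where τ = min{i : ψ_i = 0}. -/

import Mathlib

open MeasureTheory

/-- The first hitting time of `0` by the process `ψ`, valued in `ℕ∞` (`⊤` if `ψ` never
vanishes). -/
noncomputable def zeroHitTime {Ω : Type*} (ψ : ℕ → Ω → ℝ) (ω : Ω) : ℕ∞ :=
  sInf ((fun i : ℕ => (i : ℕ∞)) '' {i | ψ i ω = 0})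

lemma lt_zeroHitTime_iff {Ω : Type*} (ψ : ℕ → Ω → ℝ) (i : ℕ) (ω : Ω) :
    (i : ℕ∞) < zeroHitTime ψ ω ↔ ∀ j ≤ i, ψ j ω ≠ 0 := by
  constructor
  · intro h j hj hzero
    have h1 : zeroHitTime ψ ω ≤ (j : ℕ∞) := sInf_le ⟨j, hzero, rfl⟩
    have h2 : (j : ℕ∞) ≤ (i : ℕ∞) := by exact_mod_cast hj
    exact absurd ((h1.trans h2).trans_lt h) (lt_irrefl _)
  · intro h
    have h1 : ((i + 1 : ℕ) : ℕ∞) ≤ zeroHitTime ψ ω := by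
      apply le_sInf
      rintro b ⟨j, hj, rfl⟩
      have hij : i < j := lt_of_not_ge fun hji => h j hji hj
      show ((i + 1 : ℕ) : ℕ∞) ≤ (j : ℕ∞)
      exact_mod_cast hij
    exact lt_of_lt_of_le (by exact_mod_cast Nat.lt_succ_self i) h1

open scoped Classical in
lemma min_toNat_sum {Ω : Type*} (ψ : ℕ → Ω → ℝ) (i : ℕ) (ω : Ω) :
    ((min (zeroHitTime ψ ω) (i : ℕ∞)).toNat : ℝ) =
      ∑ j ∈ Finset.range i, (if (j : ℕ∞) < zeroHitTime ψ ω then (1:ℝ) else 0) := by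
  induction i with
  | zero => simp
  | succ n ih =>
    rw [Finset.sum_range_succ, ← ih]
    by_cases h : (n : ℕ∞) < zeroHitTime ψ ω
    · have h1 : ((n + 1 : ℕ) : ℕ∞) ≤ zeroHitTime ψ ω := by
        push_cast
        exact (ENat.add_one_le_iff (by simp)).mpr h
      rw [if_pos h, min_eq_right h1, min_eq_right h.le]
      push_cast
      rw [ENat.toNat_add (by simp) (by simp)]
      push_cast
      simp
    · have h2 : zeroHitTime ψ ω ≤ (n : ℕ∞) := not_lt.mp h
      rw [if_neg h, min_eq_left h2,
        min_eq_left (h2.trans (by exact_mod_cast Nat.le_succ n)), add_zero]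

open scoped Classical in
/-- If a nonnegative supermartingale `ψ` with `ψ₀ ≤ k₁` satisfies
`E[ψ_{i+1} | F_i] ≤ ψ_i - k₂` on the event `{ψ_i > 0}`, then
`E[ψ_i · 1{τ > i}] ≤ k₁ - k₂ · E[min(τ, i)]` for all `i`, where `τ` is the first hitting
time of `0` by `ψ`. -/
theorem stmt_8 {Ω : Type*} {m0 : MeasurableSpace Ω} {μ : Measure Ω}
    [IsProbabilityMeasure μ] (ℱ : Filtration ℕ m0)
    (ψ : ℕ → Ω → ℝ) (k₁ k₂ : ℝ) (hk₁ : 0 < k₁) (hk₂ : 0 < k₂)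
    (hnonneg : ∀ i ω, 0 ≤ ψ i ω)
    (hsuper : Supermartingale ψ ℱ μ)
    (hstart : ∀ ω, ψ 0 ω ≤ k₁)
    (hdrift : ∀ i, ∀ᵐ ω ∂μ, 0 < ψ i ω → (μ[ψ (i + 1)|ℱ i]) ω ≤ ψ i ω - k₂) :
    ∀ i : ℕ,
      (∫ ω, (if (i : ℕ∞) < zeroHitTime ψ ω then ψ i ω else 0) ∂μ) ≤
        k₁ - k₂ * ∫ ω, ((min (zeroHitTime ψ ω) (i : ℕ∞)).toNat : ℝ) ∂μ := by
  set A : ℕ → Set Ω := fun i => {ω | (i : ℕ∞) < zeroHitTime ψ ω} with hAdef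
  have hA : ∀ i, MeasurableSet[ℱ i] (A i) := by
    intro i
    have hEq : A i = ⋂ j ∈ Finset.range (i + 1), {ω | ψ j ω ≠ 0} := by
      ext ω
      simp [hAdef, lt_zeroHitTime_iff, Nat.lt_succ_iff]
    rw [hEq]
    refine Finset.measurableSet_biInter _ fun j hj => ?_
    have hj' : j ≤ i := Nat.lt_succ_iff.mp (Finset.mem_range.mp hj)
    have hm : StronglyMeasurable[ℱ i] (ψ j) := (hsuper.stronglyAdapted j).mono (ℱ.mono hj')
    exact hm.measurable (measurableSet_singleton (0:ℝ)).compl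
  have hA0 : ∀ i, MeasurableSet (A i) := fun i => ℱ.le i _ (hA i)
  -- rewrite the `if` integrands as indicators
  have hXeq : ∀ (i : ℕ) (ω : Ω), (if (i : ℕ∞) < zeroHitTime ψ ω then ψ i ω else 0)
      = Set.indicator (A i) (ψ i) ω := by
    intro i ω
    rw [Set.indicator_apply]
    rfl
  have hIndEq : ∀ (j : ℕ) (ω : Ω), (if (j : ℕ∞) < zeroHitTime ψ ω then (1:ℝ) else 0)
      = Set.indicator (A j) (fun _ => (1:ℝ)) ω := by
    intro j ω
    rw [Set.indicator_apply]
    rfl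
  have hIntX : ∀ i, Integrable (Set.indicator (A i) (ψ i)) μ :=
    fun i => (hsuper.integrable i).indicator (hA0 i)
  have hImin : ∀ i : ℕ, (∫ ω, ((min (zeroHitTime ψ ω) (i : ℕ∞)).toNat : ℝ) ∂μ)
      = ∑ j ∈ Finset.range i, (μ (A j)).toReal := by
    intro i
    simp only [min_toNat_sum, hIndEq]
    rw [integral_finset_sum _ fun j _ => (integrable_const (1:ℝ)).indicator (hA0 j)]
    refine Finset.sum_congr rfl fun j _ => ?_
    rw [integral_indicator_const (1:ℝ) (hA0 j)]
    simp
    rfl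
  intro i
  simp only [hXeq, hImin]
  induction i with
  | zero =>
    simp only [Finset.range_zero, Finset.sum_empty, mul_zero, sub_zero]
    calc (∫ ω, Set.indicator (A 0) (ψ 0) ω ∂μ)
        ≤ ∫ ω, ψ 0 ω ∂μ := by
          refine integral_mono (hIntX 0) (hsuper.integrable 0) fun ω => ?_
          exact Set.indicator_le_self' (fun ω _ => hnonneg 0 ω) ω
      _ ≤ ∫ _, k₁ ∂μ := integral_mono (hsuper.integrable 0) (integrable_const k₁)
            fun ω => hstart ω
      _ = k₁ := by simp
  | succ n ihn =>
    have hsub : A (n + 1) ⊆ A n := by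
      intro ω h
      have h' : ((n + 1 : ℕ) : ℕ∞) < zeroHitTime ψ ω := h
      show (n : ℕ∞) < zeroHitTime ψ ω
      exact lt_of_le_of_lt (by exact_mod_cast Nat.le_succ n) h'
    have hdriftA : (μ[ψ (n + 1)|ℱ n]) ≤ᵐ[μ.restrict (A n)] fun ω => ψ n ω - k₂ := by
      refine (ae_restrict_iff' (hA0 n)).mpr ?_
      filter_upwards [hdrift n] with ω hω hmem
      have hne : ψ n ω ≠ 0 := (lt_zeroHitTime_iff ψ n ω).mp hmem n le_rfl
      exact hω (lt_of_le_of_ne (hnonneg n ω) (Ne.symm hne))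
    have step : (∫ ω, Set.indicator (A (n + 1)) (ψ (n + 1)) ω ∂μ)
        ≤ (∫ ω, Set.indicator (A n) (ψ n) ω ∂μ) - k₂ * (μ (A n)).toReal := by
      calc (∫ ω, Set.indicator (A (n + 1)) (ψ (n + 1)) ω ∂μ)
          ≤ ∫ ω, Set.indicator (A n) (ψ (n + 1)) ω ∂μ := by
            refine integral_mono (hIntX (n + 1))
              ((hsuper.integrable (n + 1)).indicator (hA0 n)) fun ω => ?_
            exact Set.indicator_le_indicator_of_subset hsub (fun ω => hnonneg (n + 1) ω) ω
        _ = ∫ ω in A n, ψ (n + 1) ω ∂μ := integral_indicator (hA0 n)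
        _ = ∫ ω in A n, (μ[ψ (n + 1)|ℱ n]) ω ∂μ :=
            (setIntegral_condExp (ℱ.le n) (hsuper.integrable (n + 1)) (hA n)).symm
        _ ≤ ∫ ω in A n, (ψ n ω - k₂) ∂μ := by
            refine integral_mono_ae integrable_condExp.integrableOn
              (((hsuper.integrable n).sub (integrable_const k₂)).integrableOn) hdriftA
        _ = (∫ ω in A n, ψ n ω ∂μ) - ∫ ω in A n, k₂ ∂μ :=
            integral_sub ((hsuper.integrable n).integrableOn)
              (integrable_const k₂).integrableOn
        _ = (∫ ω, Set.indicator (A n) (ψ n) ω ∂μ) - k₂ * (μ (A n)).toReal := by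
            rw [integral_indicator (hA0 n), setIntegral_const, smul_eq_mul, mul_comm]
            rfl
    rw [Finset.sum_range_succ, mul_add, sub_add_eq_sub_sub]
    calc (∫ ω, Set.indicator (A (n + 1)) (ψ (n + 1)) ω ∂μ)
        ≤ (∫ ω, Set.indicator (A n) (ψ n) ω ∂μ) - k₂ * (μ (A n)).toReal := step
      _ ≤ (k₁ - k₂ * ∑ j ∈ Finset.range n, (μ (A j)).toReal) - k₂ * (μ (A n)).toReal := by
          linarith [ihn]
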